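/- Let f(y,z) = a + by + cz + dyz be a polynomial with nonnegative real coefficients a, b, c, d. Then log f is concave on the positive orthant {(y,z) : y > 0, z > 0} if and only if 2bc ≥ ad. -/

import Mathlib

private lemma seg_pos {x y t : ℝ} (hx : 0 < x) (hy : 0 < y) (h0 : 0 ≤ t) (h1 : t ≤ 1) :
    0 < x + t * (y - x) := by
  rcases lt_or_eq_of_le h1 with h | h
  · nlinarith [mul_pos (show (0:ℝ) < 1 - t by linarith) hx, mul_nonneg h0 hy.le]
  · subst h; simpa using hy

private lemma key_ineq (a b c d : ℝ) (ha : 0 ≤ a) (hb : 0 ≤ b) (hc : 0 ≤ c) (hd : 0 ≤ d)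
    (had : a * d ≤ 2 * (b * c)) {y z : ℝ} (hy : 0 < y) (hz : 0 < z) (u v : ℝ) :
    2 * (d * u * v) * (a + b * y + c * z + d * y * z) ≤ ((b + d * z) * u + (c + d * y) * v) ^ 2 := by
  have hP : 0 ≤ (b + d * z) * (c + d * y) - b * c := by
    nlinarith [mul_nonneg (mul_nonneg hb hd) hy.le, mul_nonneg (mul_nonneg hc hd) hz.le,
      mul_nonneg (mul_nonneg (mul_nonneg hd hd) hy.le) hz.le]
  rcases le_total 0 (u * v) with huv | huv
  · nlinarith [sq_nonneg ((b + d * z) * u - (c + d * y) * v), mul_nonneg huv hP,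
      mul_nonneg huv (show 0 ≤ 2 * (b * c) - a * d by linarith)]
  · nlinarith [sq_nonneg ((b + d * z) * u + (c + d * y) * v),
      mul_nonneg (neg_nonneg.2 huv) hP, mul_nonneg (neg_nonneg.2 huv) (mul_nonneg ha hd)]

private lemma log_quad_concave (A B C : ℝ)
    (hq : ∀ t ∈ Set.Icc (0:ℝ) 1, 0 < A + B * t + C * t ^ 2)
    (hineq : ∀ t ∈ Set.Icc (0:ℝ) 1, 2 * C * (A + B * t + C * t ^ 2) ≤ (B + 2 * C * t) ^ 2) :
    ConcaveOn ℝ (Set.Icc (0:ℝ) 1) (fun t => Real.log (A + B * t + C * t ^ 2)) := by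
  have hqd : ∀ t : ℝ, HasDerivAt (fun s : ℝ => A + B * s + C * s ^ 2) (B + 2 * C * t) t := by
    intro t
    have h : HasDerivAt (fun s : ℝ => A + B * s + C * s ^ 2) (0 + B * 1 + C * (2 * t ^ 1)) t := by
      exact (((hasDerivAt_const t A).add ((hasDerivAt_id t).const_mul B)).add
        ((hasDerivAt_pow 2 t).const_mul C))
    convert h using 1; ring
  apply concaveOn_of_hasDerivWithinAt2_nonpos (convex_Icc 0 1)
    (f' := fun t => (B + 2 * C * t) / (A + B * t + C * t ^ 2))
    (f'' := fun t => (2 * C * (A + B * t + C * t ^ 2) - (B + 2 * C * t) ^ 2)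
       / (A + B * t + C * t ^ 2) ^ 2)
  · apply ContinuousOn.log
    · fun_prop
    · intro t ht; exact (hq t ht).ne'
  · intro x hx
    rw [interior_Icc] at hx
    have hpos := hq x ⟨hx.1.le, hx.2.le⟩
    have h1 : HasDerivAt (fun t => Real.log (A + B * t + C * t ^ 2))
        ((A + B * x + C * x ^ 2)⁻¹ * (B + 2 * C * x)) x :=
      by have := (Real.hasDerivAt_log hpos.ne').comp x (hqd x); exact this
    have h2 : (A + B * x + C * x ^ 2)⁻¹ * (B + 2 * C * x)
        = (B + 2 * C * x) / (A + B * x + C * x ^ 2) := by ring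
    exact (h2 ▸ h1).hasDerivWithinAt
  · intro x hx
    rw [interior_Icc] at hx
    have hpos := hq x ⟨hx.1.le, hx.2.le⟩
    have hnum : HasDerivAt (fun t : ℝ => B + 2 * C * t) (2 * C) x := by
      have h : HasDerivAt (fun t : ℝ => B + 2 * C * t) (0 + 2 * C * 1) x :=
        (hasDerivAt_const x B).add ((hasDerivAt_id x).const_mul (2 * C))
      convert h using 1; ring
    have h1 := hnum.div (hqd x) hpos.ne'
    have h2 : (2 * C * (A + B * x + C * x ^ 2) - (B + 2 * C * x) * (B + 2 * C * x))
        / (A + B * x + C * x ^ 2) ^ 2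
        = (2 * C * (A + B * x + C * x ^ 2) - (B + 2 * C * x) ^ 2)
        / (A + B * x + C * x ^ 2) ^ 2 := by ring
    exact (h2 ▸ h1).hasDerivWithinAt
  · intro x hx
    rw [interior_Icc] at hx
    exact div_nonpos_iff.2 (Or.inr ⟨sub_nonpos.2 (hineq x ⟨hx.1.le, hx.2.le⟩), by positivity⟩)

private lemma f_pos (a b c d : ℝ) (ha : 0 < a) (hb : 0 ≤ b) (hc : 0 ≤ c) (hd : 0 ≤ d)
    {y z : ℝ} (hy : 0 < y) (hz : 0 < z) : 0 < a + b * y + c * z + d * y * z := by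
  have h1 := mul_nonneg hb hy.le
  have h2 := mul_nonneg hc hz.le
  have h3 := mul_nonneg (mul_nonneg hd hy.le) hz.le
  linarith

set_option maxHeartbeats 1000000 in
/-- `log f` for `f(y,z) = a + b*y + c*z + d*y*z` with nonnegative
coefficients (and `a > 0` ensuring positivity on the positive orthant) is concave
on the positive orthant iff `2*b*c ≥ a*d`. -/
theorem bilinear_log_concave_iff (a b c d : ℝ) (ha : 0 < a) (hb : 0 ≤ b) (hc : 0 ≤ c)
    (hd : 0 ≤ d) :
    ConcaveOn ℝ {p : ℝ × ℝ | 0 < p.1 ∧ 0 < p.2}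
      (fun p : ℝ × ℝ => Real.log (a + b * p.1 + c * p.2 + d * p.1 * p.2)) ↔
    a * d ≤ 2 * (b * c) := by
  constructor
  · -- forward: concave → a*d ≤ 2*b*c
    intro hconc
    by_contra hcon
    push_neg at hcon
    have hbc : 0 ≤ b * c := mul_nonneg hb hc
    have hd0 : 0 < d := by
      rcases hd.eq_or_lt with h | h
      · rw [← h] at hcon; nlinarith
      · exact h
    have hδ : 0 < a * d - 2 * (b * c) := by linarith
    have hden : 0 < 2 * d * (b + c + d) := by positivity
    obtain ⟨ε, hε0, hε1, hε2⟩ : ∃ ε : ℝ, 0 < ε ∧ ε ≤ 1 ∧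
        ε * (2 * d * (b + c + d)) ≤ a * d - 2 * (b * c) := by
      refine ⟨min 1 ((a * d - 2 * (b * c)) / (2 * d * (b + c + d))),
        lt_min one_pos (by positivity), min_le_left _ _, ?_⟩
      calc min 1 ((a * d - 2 * (b * c)) / (2 * d * (b + c + d))) * (2 * d * (b + c + d))
          ≤ ((a * d - 2 * (b * c)) / (2 * d * (b + c + d))) * (2 * d * (b + c + d)) :=
            mul_le_mul_of_nonneg_right (min_le_right _ _) hden.le
        _ = a * d - 2 * (b * c) := by field_simp
    obtain ⟨X, hXdef⟩ : ∃ X : ℝ, X = b + d * ε := ⟨_, rfl⟩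
    obtain ⟨Y, hYdef⟩ : ∃ Y : ℝ, Y = c + d * ε := ⟨_, rfl⟩
    have hX : 0 < X := by rw [hXdef]; positivity
    have hY : 0 < Y := by rw [hYdef]; positivity
    obtain ⟨t, ht0, htX, htY⟩ : ∃ t : ℝ, 0 < t ∧ t * X < ε ∧ t * Y < ε := by
      refine ⟨ε / (2 * (X + Y + 1)), by positivity, ?_, ?_⟩ <;>
        · rw [div_mul_eq_mul_div, div_lt_iff₀ (by positivity)]
          nlinarith
    have hp1 : ((ε - t * Y, ε - t * X) : ℝ × ℝ) ∈ {p : ℝ × ℝ | 0 < p.1 ∧ 0 < p.2} := by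
      constructor <;> simp <;> linarith
    have hp2 : ((ε + t * Y, ε + t * X) : ℝ × ℝ) ∈ {p : ℝ × ℝ | 0 < p.1 ∧ 0 < p.2} := by
      constructor <;> simp <;> nlinarith [mul_pos ht0 hX, mul_pos ht0 hY]
    have key := hconc.2 hp1 hp2 (by norm_num : (0:ℝ) ≤ 1/2) (by norm_num : (0:ℝ) ≤ 1/2)
      (by norm_num)
    have hmid : (1/2 : ℝ) • ((ε - t * Y, ε - t * X) : ℝ × ℝ)
        + (1/2 : ℝ) • ((ε + t * Y, ε + t * X) : ℝ × ℝ) = (ε, ε) := by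
      simp [Prod.ext_iff, smul_eq_mul]; constructor <;> ring
    rw [hmid] at key
    dsimp only at key
    simp only [smul_eq_mul] at key
    -- abbreviations for the three values
    have hf1 : 0 < a + b * (ε - t * Y) + c * (ε - t * X) + d * (ε - t * Y) * (ε - t * X) :=
      f_pos a b c d ha hb hc hd (by linarith) (by linarith)
    have hf2 : 0 < a + b * (ε + t * Y) + c * (ε + t * X) + d * (ε + t * Y) * (ε + t * X) :=
      f_pos a b c d ha hb hc hd (by nlinarith [mul_pos ht0 hY]) (by nlinarith [mul_pos ht0 hX])
    have hfm : 0 < a + b * ε + c * ε + d * ε * ε :=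
      f_pos a b c d ha hb hc hd hε0 hε0
    -- from key: f1 * f2 ≤ fm ^ 2
    have hprod : (a + b * (ε - t * Y) + c * (ε - t * X) + d * (ε - t * Y) * (ε - t * X))
        * (a + b * (ε + t * Y) + c * (ε + t * X) + d * (ε + t * Y) * (ε + t * X))
        ≤ (a + b * ε + c * ε + d * ε * ε) ^ 2 := by
      have hlog : Real.log ((a + b * (ε - t * Y) + c * (ε - t * X) + d * (ε - t * Y) * (ε - t * X))
          * (a + b * (ε + t * Y) + c * (ε + t * X) + d * (ε + t * Y) * (ε + t * X)))
          ≤ Real.log ((a + b * ε + c * ε + d * ε * ε) ^ 2) := by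
        rw [Real.log_mul hf1.ne' hf2.ne', Real.log_pow]
        push_cast
        linarith
      exact (Real.log_le_log_iff (by positivity) (by positivity)).1 hlog
    have hkey2 : 2 * X * Y < d * (a + b * ε + c * ε + d * ε * ε) := by
      rw [hXdef, hYdef]
      nlinarith [mul_nonneg (mul_nonneg (sub_nonneg.2 hε1) hε0.le) (mul_pos hd0 hd0).le]
    have hid : (a + b * (ε - t * Y) + c * (ε - t * X) + d * (ε - t * Y) * (ε - t * X))
        * (a + b * (ε + t * Y) + c * (ε + t * X) + d * (ε + t * Y) * (ε + t * X))
        - (a + b * ε + c * ε + d * ε * ε) ^ 2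
        = t^2 * ((X * Y) * (d * (a + b * ε + c * ε + d * ε * ε) - 2 * X * Y))
          + t^2 * ((X * Y) * (d * (a + b * ε + c * ε + d * ε * ε) - 2 * X * Y))
          + t^4 * (d * X * Y)^2 := by
      rw [hXdef, hYdef]; ring
    nlinarith [mul_pos (mul_pos ht0 ht0) (mul_pos (mul_pos hX hY) (sub_pos.2 hkey2)),
      pow_pos ht0 2, sq_nonneg (t^2 * (d * X * Y))]
  · -- reverse: a*d ≤ 2*b*c → concave
    intro had
    constructor
    · rintro ⟨x1, x2⟩ ⟨hx1, hx2⟩ ⟨y1, y2⟩ ⟨hy1, hy2⟩ p q hp hq hpq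
      have h1 : 0 < p * x1 + q * y1 := by
        rcases hp.eq_or_lt with h | h
        · rw [← h] at hpq ⊢; simp at hpq ⊢; nlinarith
        · nlinarith [mul_pos h hx1, mul_nonneg hq hy1.le]
      have h2 : 0 < p * x2 + q * y2 := by
        rcases hp.eq_or_lt with h | h
        · rw [← h] at hpq ⊢; simp at hpq ⊢; nlinarith
        · nlinarith [mul_pos h hx2, mul_nonneg hq hy2.le]
      exact ⟨h1, h2⟩
    · rintro ⟨x1, x2⟩ ⟨hx1, hx2⟩ ⟨y1, y2⟩ ⟨hy1, hy2⟩ p q hp hq hpq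
      have glem := log_quad_concave (a + b*x1 + c*x2 + d*x1*x2)
        (b*(y1-x1) + c*(y2-x2) + d*(x1*(y2-x2) + x2*(y1-x1)))
        (d*(y1-x1)*(y2-x2)) ?_ ?_
      · have h01 : (0:ℝ) ∈ Set.Icc (0:ℝ) 1 := by norm_num
        have h11 : (1:ℝ) ∈ Set.Icc (0:ℝ) 1 := by norm_num
        have key := glem.2 h11 h01 hq hp (by linarith)
        dsimp only at key
        simp only [smul_eq_mul] at key
        have harg : q * (1:ℝ) + p * (0:ℝ) = q := by ring
        rw [harg] at key
        have e1 : (a + b*x1 + c*x2 + d*x1*x2)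
            + (b*(y1-x1) + c*(y2-x2) + d*(x1*(y2-x2) + x2*(y1-x1))) * 1
            + (d*(y1-x1)*(y2-x2)) * 1^2 = a + b*y1 + c*y2 + d*y1*y2 := by ring
        have e0 : (a + b*x1 + c*x2 + d*x1*x2)
            + (b*(y1-x1) + c*(y2-x2) + d*(x1*(y2-x2) + x2*(y1-x1))) * 0
            + (d*(y1-x1)*(y2-x2)) * 0^2 = a + b*x1 + c*x2 + d*x1*x2 := by ring
        have hp1 : p = 1 - q := by linarith
        have e2 : (a + b*x1 + c*x2 + d*x1*x2)
            + (b*(y1-x1) + c*(y2-x2) + d*(x1*(y2-x2) + x2*(y1-x1))) * q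
            + (d*(y1-x1)*(y2-x2)) * q^2
            = a + b*(p*x1 + q*y1) + c*(p*x2 + q*y2) + d*(p*x1 + q*y1)*(p*x2 + q*y2) := by
          rw [hp1]; ring
        rw [e0, e1, e2] at key
        show p * Real.log (a + b*x1 + c*x2 + d*x1*x2) + q * Real.log (a + b*y1 + c*y2 + d*y1*y2)
          ≤ Real.log (a + b*(p*x1 + q*y1) + c*(p*x2 + q*y2) + d*(p*x1 + q*y1)*(p*x2 + q*y2))
        linarith
      · intro s hs
        have hys := seg_pos hx1 hy1 hs.1 hs.2
        have hzs := seg_pos hx2 hy2 hs.1 hs.2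
        have e : (a + b*x1 + c*x2 + d*x1*x2)
            + (b*(y1-x1) + c*(y2-x2) + d*(x1*(y2-x2) + x2*(y1-x1))) * s
            + (d*(y1-x1)*(y2-x2)) * s^2
            = a + b*(x1 + s*(y1-x1)) + c*(x2 + s*(y2-x2))
              + d*(x1 + s*(y1-x1))*(x2 + s*(y2-x2)) := by ring
        rw [e]
        exact f_pos a b c d ha hb hc hd hys hzs
      · intro s hs
        have hys := seg_pos hx1 hy1 hs.1 hs.2
        have hzs := seg_pos hx2 hy2 hs.1 hs.2
        calc 2 * (d*(y1-x1)*(y2-x2)) * ((a + b*x1 + c*x2 + d*x1*x2)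
              + (b*(y1-x1) + c*(y2-x2) + d*(x1*(y2-x2) + x2*(y1-x1))) * s
              + (d*(y1-x1)*(y2-x2)) * s^2)
            = 2 * (d*(y1-x1)*(y2-x2)) * (a + b*(x1 + s*(y1-x1)) + c*(x2 + s*(y2-x2))
              + d*(x1 + s*(y1-x1))*(x2 + s*(y2-x2))) := by ring
          _ ≤ ((b + d*(x2 + s*(y2-x2)))*(y1-x1) + (c + d*(x1 + s*(y1-x1)))*(y2-x2))^2 :=
              key_ineq a b c d ha.le hb hc hd had hys hzs (y1-x1) (y2-x2)
          _ = ((b*(y1-x1) + c*(y2-x2) + d*(x1*(y2-x2) + x2*(y1-x1)))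
              + 2 * (d*(y1-x1)*(y2-x2)) * s)^2 := by ring
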